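/- arXiv:2011.10423 — 2 statements merged into one kernel-verified Lean document; each statement's English description precedes it below -/
import Mathlib

section
/- Let U be a nonnegative random variable with unit exponential distribution, W a random variable independent of U, and Z a random variable taking values in a finite set {z_1,...,z_L}. Let φ: {z_1,...,z_L} × ℝ₊ → ℝ₊ be strictly increasing in its second argument and set T = φ(Z,U). Define S(t,z|w) = P(T ≥ t, Z = z | W = w). Then for every u ∈ ℝ₊ and every w in the support of W, the sum over ℓ = 1,...,L of S(φ(z_ℓ,u), z_ℓ | w) equals e^{-u}. -/
open MeasureTheory ProbabilityTheory
open scoped ENNReal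

/-- With `U ~ Exp(1)`, `W` independent of `U`, `Z` taking values in the
finite set `{z 1, ..., z L}`, `φ` strictly increasing in its second argument and
`T = φ(Z, U)`, the conditional joint survival functions
`S(t, z | w) = P(T ≥ t, Z = z | W = w)` satisfy
`∑ ℓ, S(φ(z ℓ, u), z ℓ | w) = e^{-u}` for every `u ≥ 0` and every `w` with `P(W = w) > 0`. -/
theorem stmt0 {Ω α β : Type*} [MeasurableSpace Ω] [MeasurableSpace α]
    [MeasurableSingletonClass α] [MeasurableSpace β] [MeasurableSingletonClass β]
    (μ : Measure Ω) [IsProbabilityMeasure μ]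
    (L : ℕ) (z : Fin L → α) (hzinj : Function.Injective z)
    (U : Ω → ℝ) (W : Ω → β) (Z : Ω → α)
    (hU : Measurable U) (hW : Measurable W) (hZ : Measurable Z)
    (hZsupp : ∀ ω, ∃ ℓ, Z ω = z ℓ)
    (φ : α → ℝ → ℝ) (hφ : ∀ a, StrictMono (φ a))
    (hUexp : ∀ u : ℝ, 0 ≤ u → μ {ω | u ≤ U ω} = ENNReal.ofReal (Real.exp (-u)))
    (hindep : IndepFun U W μ)
    (T : Ω → ℝ) (hT : ∀ ω, T ω = φ (Z ω) (U ω))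
    (S : ℝ → α → β → ℝ≥0∞)
    (hS : ∀ t a w, S t a w = ProbabilityTheory.cond μ (W ⁻¹' {w}) {ω | t ≤ T ω ∧ Z ω = a})
    (u : ℝ) (hu : 0 ≤ u) (w : β) (hw : μ (W ⁻¹' {w}) ≠ 0) :
    ∑ ℓ : Fin L, S (φ (z ℓ) u) (z ℓ) w = ENNReal.ofReal (Real.exp (-u)) := by
  have hsW : MeasurableSet (W ⁻¹' {w}) := hW (measurableSet_singleton w)
  have hset : ∀ ℓ : Fin L, {ω | φ (z ℓ) u ≤ T ω ∧ Z ω = z ℓ}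
      = {ω | u ≤ U ω} ∩ Z ⁻¹' {z ℓ} := by
    intro ℓ; ext ω
    simp only [Set.mem_setOf_eq, Set.mem_inter_iff, Set.mem_preimage, Set.mem_singleton_iff]
    constructor
    · rintro ⟨h1, h2⟩
      rw [hT, h2] at h1
      exact ⟨(hφ (z ℓ)).le_iff_le.mp h1, h2⟩
    · rintro ⟨h1, h2⟩
      exact ⟨by rw [hT, h2]; exact (hφ (z ℓ)).le_iff_le.mpr h1, h2⟩
  have hsum : ∑ ℓ : Fin L, μ (W ⁻¹' {w} ∩ ({ω | u ≤ U ω} ∩ Z ⁻¹' {z ℓ}))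
      = μ (W ⁻¹' {w} ∩ {ω | u ≤ U ω}) := by
    rw [← tsum_fintype (L := SummationFilter.unconditional _), ← measure_iUnion]
    · congr 1
      ext ω
      simp only [Set.mem_iUnion, Set.mem_inter_iff, Set.mem_preimage, Set.mem_singleton_iff]
      constructor
      · rintro ⟨ℓ, hw1, hu1, _⟩; exact ⟨hw1, hu1⟩
      · rintro ⟨hw1, hu1⟩
        obtain ⟨ℓ, hℓ⟩ := hZsupp ω
        exact ⟨ℓ, hw1, hu1, hℓ⟩
    · intro i j hij
      refine Set.disjoint_left.mpr fun ω hi hj => hij ?_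
      exact hzinj (hi.2.2.symm.trans hj.2.2)
    · intro ℓ
      exact hsW.inter ((measurableSet_le measurable_const hU).inter
        (hZ (measurableSet_singleton _)))
  have hind : μ (W ⁻¹' {w} ∩ {ω | u ≤ U ω}) = μ {ω | u ≤ U ω} * μ (W ⁻¹' {w}) := by
    have : W ⁻¹' {w} ∩ {ω | u ≤ U ω} = U ⁻¹' Set.Ici u ∩ W ⁻¹' {w} := by
      rw [Set.inter_comm]; rfl
    rw [this, hindep.measure_inter_preimage_eq_mul _ _ measurableSet_Ici
      (measurableSet_singleton w)]
    rfl
  calc ∑ ℓ : Fin L, S (φ (z ℓ) u) (z ℓ) w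
      = ∑ ℓ : Fin L, (μ (W ⁻¹' {w}))⁻¹ * μ (W ⁻¹' {w} ∩ ({ω | u ≤ U ω} ∩ Z ⁻¹' {z ℓ})) := by
        refine Finset.sum_congr rfl fun ℓ _ => ?_
        rw [hS, hset, ProbabilityTheory.cond_apply hsW]
    _ = (μ (W ⁻¹' {w}))⁻¹ * μ (W ⁻¹' {w} ∩ {ω | u ≤ U ω}) := by
        rw [← Finset.mul_sum, hsum]
    _ = μ {ω | u ≤ U ω} := by
        rw [hind, ← mul_assoc, mul_comm (μ (W ⁻¹' {w}))⁻¹,  mul_assoc,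
          ENNReal.inv_mul_cancel hw (measure_ne_top μ _), mul_one]
    _ = ENNReal.ofReal (Real.exp (-u)) := hUexp u hu
end

section
/- Let G(u) be the K×L matrix with entries G_{kℓ}(u) = P(Z = z_ℓ | U = u, W = w_k). Assume rank(G(u)) ≥ L for all u (so K ≥ L), φ(z_ℓ,·) is differentiable with φ'(z_ℓ,u) ≠ 0, and f(φ(z_ℓ,u), z_ℓ | w_k) · φ'(z_ℓ,u) = e^{-u} G_{kℓ}(u). If a function ψ in L²_{↑}(Z,U) satisfies Σ_{ℓ=1}^L (ψ(z_ℓ,u) − φ(z_ℓ,u)) f(φ(z_ℓ,u), z_ℓ | w_k) = 0 for all u ≥ 0 and all k = 1,...,K, then ψ(z_ℓ,u) = φ(z_ℓ,u) for all ℓ and u. -/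
/-- Local identification.  With `G(u)` the `K × L` matrix of conditional
treatment probabilities `G_{kℓ}(u) = P(Z = z ℓ | U = u, W = w k)`, `rank(G(u)) ≥ L`,
`φ(z ℓ, ·)` differentiable with nonvanishing derivative `φ'`, and the change-of-variables
relation `f(φ(z ℓ,u), z ℓ | w k) · φ'(z ℓ, u) = e^{-u} G_{kℓ}(u)`: if `ψ` (strictly
increasing and differentiable in its second argument) satisfies
`∑ ℓ, (ψ(z ℓ,u) − φ(z ℓ,u)) f(φ(z ℓ,u), z ℓ | w k) = 0` for all `u ≥ 0` and all `k`,
then `ψ = φ`. -/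
theorem stmt5 (L K : ℕ) (G : ℝ → Matrix (Fin K) (Fin L) ℝ)
    (hrank : ∀ u : ℝ, 0 ≤ u → L ≤ (G u).rank)
    (φ ψ : Fin L → ℝ → ℝ) (φ' : Fin L → ℝ → ℝ)
    (hφdiff : ∀ ℓ u, HasDerivAt (φ ℓ) (φ' ℓ u) u)
    (hφ' : ∀ ℓ u, φ' ℓ u ≠ 0)
    (hψmono : ∀ ℓ, StrictMono (ψ ℓ)) (hψdiff : ∀ ℓ, Differentiable ℝ (ψ ℓ))
    (f : ℝ → Fin L → Fin K → ℝ)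
    (hcov : ∀ (ℓ : Fin L) (k : Fin K) (u : ℝ), 0 ≤ u →
      f (φ ℓ u) ℓ k * φ' ℓ u = Real.exp (-u) * G u k ℓ)
    (horth : ∀ (u : ℝ), 0 ≤ u → ∀ k : Fin K,
      ∑ ℓ : Fin L, (ψ ℓ u - φ ℓ u) * f (φ ℓ u) ℓ k = 0) :
    ∀ (ℓ : Fin L) (u : ℝ), 0 ≤ u → ψ ℓ u = φ ℓ u := by
  intro ℓ u hu
  set v : Fin L → ℝ := fun j => (ψ j u - φ j u) / φ' j u with hv
  -- G u *ᵥ v = 0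
  have hGv : (G u).mulVecLin v = 0 := by
    ext k
    have hsum : Real.exp (-u) * ∑ j, G u k j * v j = 0 := by
      rw [Finset.mul_sum]
      rw [← horth u hu k]
      apply Finset.sum_congr rfl
      intro j _
      have hc := hcov j k u hu
      have hne := hφ' j u
      have hvj : v j * φ' j u = ψ j u - φ j u := div_mul_cancel₀ _ hne
      calc Real.exp (-u) * (G u k j * v j)
          = (Real.exp (-u) * G u k j) * v j := by ring
        _ = (f (φ j u) j k * φ' j u) * v j := by rw [hc]
        _ = (ψ j u - φ j u) * f (φ j u) j k := by rw [← hvj]; ring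
    have hexp : Real.exp (-u) ≠ 0 := Real.exp_ne_zero _
    have : ∑ j, G u k j * v j = 0 := by
      rcases mul_eq_zero.mp hsum with h | h
      · exact absurd h hexp
      · exact h
    simpa [Matrix.mulVecLin, Matrix.mulVec, dotProduct] using this
  -- injectivity from rank
  have hrankle : (G u).rank ≤ L := (G u).rank_le_width
  have hrankeq : (G u).rank = L := le_antisymm hrankle (hrank u hu)
  have hker : LinearMap.ker (G u).mulVecLin = ⊥ := by
    have hfr := LinearMap.finrank_range_add_finrank_ker (G u).mulVecLin
    rw [Module.finrank_pi, Fintype.card_fin] at hfr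
    have hrange : Module.finrank ℝ (LinearMap.range (G u).mulVecLin) = L := hrankeq
    have : Module.finrank ℝ (LinearMap.ker (G u).mulVecLin) = 0 := by omega
    exact Submodule.finrank_eq_zero.mp this
  have hv0 : v = 0 := by
    have : v ∈ LinearMap.ker (G u).mulVecLin := hGv
    rw [hker] at this
    simpa using this
  have : v ℓ = 0 := by rw [hv0]; rfl
  have := (div_eq_zero_iff.mp this).resolve_right (hφ' ℓ u)
  linarith
end
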